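/- For every x ∈ ℝ^n, the map F is differentiable at x and its Jacobian matrix is given by (dF/dx)(x) = diag(1 ⊘ (K(b ⊘ (K^T e^x)))) · K · diag(b ⊘ (K^T e^x)^2) · K^T · diag(e^x), where (K^T e^x)^2 denotes the entrywise square. Moreover this equals diag(e^{F(x)}) · diag(1 ⊘ (a ⊙ e^x)) · P(x) · diag(1 ⊘ b) · P(x)^T, where ⊙ denotes the entrywise product. -/

import Mathlib

open Finset Matrix

set_option maxHeartbeats 1000000

/-- Expression of the Jacobian of the Sinkhorn map `F`: `F` is differentiable at every
`x` with Jacobian matrix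
`diag(1 ⊘ (K(b ⊘ Kᵀeˣ))) * K * diag(b ⊘ (Kᵀeˣ)²) * Kᵀ * diag(eˣ)`, which moreover
equals `diag(e^{F x}) * diag(1 ⊘ (a ⊙ eˣ)) * P(x) * diag(1 ⊘ b) * P(x)ᵀ`. -/
theorem jacobian_of_sinkhorn_map
    (n m : ℕ) (hn : 0 < n) (hm : 0 < m)
    (a : Fin n → ℝ) (b : Fin m → ℝ) (K : Matrix (Fin n) (Fin m) ℝ)
    (ha_pos : ∀ i, 0 < a i) (ha_sum : ∑ i, a i = 1)
    (hb_pos : ∀ j, 0 < b j) (hb_sum : ∑ j, b j = 1)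
    (hK_pos : ∀ i j, 0 < K i j)
    (F : (Fin n → ℝ) → Fin n → ℝ)
    (hF : ∀ x i, F x i = Real.log (a i) -
      Real.log (∑ j, K i j * (b j / ∑ i', K i' j * Real.exp (x i'))))
    (P : (Fin n → ℝ) → Matrix (Fin n) (Fin m) ℝ)
    (hP : ∀ x i j, P x i j =
      Real.exp (x i) * K i j * (b j / ∑ i', K i' j * Real.exp (x i'))) :
    ∀ x : Fin n → ℝ,
      HasFDerivAt F
        (LinearMap.toContinuousLinearMap (Matrix.mulVecLin
          (Matrix.diagonal (fun i =>
              1 / (∑ j, K i j * (b j / ∑ i', K i' j * Real.exp (x i')))) *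
            K *
            Matrix.diagonal (fun j =>
              b j / (∑ i', K i' j * Real.exp (x i')) ^ 2) *
            Kᵀ *
            Matrix.diagonal (fun i => Real.exp (x i))))) x ∧
      (Matrix.diagonal (fun i =>
          1 / (∑ j, K i j * (b j / ∑ i', K i' j * Real.exp (x i')))) *
        K *
        Matrix.diagonal (fun j => b j / (∑ i', K i' j * Real.exp (x i')) ^ 2) *
        Kᵀ *
        Matrix.diagonal (fun i => Real.exp (x i)))
      = Matrix.diagonal (fun i => Real.exp (F x i)) *
        Matrix.diagonal (fun i => 1 / (a i * Real.exp (x i))) *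
        P x *
        Matrix.diagonal (fun j => 1 / b j) *
        (P x)ᵀ := by
  intro x
  have hs : ∀ j, 0 < ∑ i', K i' j * Real.exp (x i') := fun j =>
    Finset.sum_pos (fun i _ => mul_pos (hK_pos i j) (Real.exp_pos _))
      ⟨⟨0, hn⟩, Finset.mem_univ _⟩
  have hg : ∀ i, 0 < ∑ j, K i j * (b j / ∑ i', K i' j * Real.exp (x i')) := fun i =>
    Finset.sum_pos (fun j _ => mul_pos (hK_pos i j) (div_pos (hb_pos j) (hs j)))
      ⟨⟨0, hm⟩, Finset.mem_univ _⟩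
  constructor
  · rw [hasFDerivAt_pi']
    intro i
    have hDs : ∀ j, HasFDerivAt (fun y : Fin n → ℝ => ∑ i', K i' j * Real.exp (y i'))
        (∑ i', (K i' j * Real.exp (x i')) • (ContinuousLinearMap.proj i' :
          (Fin n → ℝ) →L[ℝ] ℝ)) x := by
      intro j
      refine HasFDerivAt.fun_sum fun i' _ => ?_
      have h1 : HasFDerivAt (fun y : Fin n → ℝ => Real.exp (y i'))
          (Real.exp (x i') • (ContinuousLinearMap.proj i' : (Fin n → ℝ) →L[ℝ] ℝ)) x :=
        (hasFDerivAt_apply i' x).exp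
      simpa [smul_smul] using h1.const_mul (K i' j)
    have hDg : HasFDerivAt
        (fun y : Fin n → ℝ => ∑ j, K i j * b j * (∑ i', K i' j * Real.exp (y i'))⁻¹)
        (∑ j, (K i j * b j) • ((-((∑ i', K i' j * Real.exp (x i')) ^ 2)⁻¹) •
          (∑ i', (K i' j * Real.exp (x i')) •
            (ContinuousLinearMap.proj i' : (Fin n → ℝ) →L[ℝ] ℝ)))) x := by
      refine HasFDerivAt.fun_sum fun j _ => ?_
      exact ((hasDerivAt_inv (hs j).ne').comp_hasFDerivAt x (hDs j)).const_mul _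
    have hg' : (∑ j, K i j * b j * (∑ i', K i' j * Real.exp (x i'))⁻¹) ≠ 0 := by
      have := hg i
      simp only [div_eq_mul_inv, mul_assoc] at this ⊢
      exact this.ne'
    have hlog := hDg.log hg'
    have hfinal := hlog.const_sub (Real.log (a i))
    have hfun : (fun y => F y i) =
        (fun y : Fin n → ℝ => Real.log (a i) -
          Real.log (∑ j, K i j * b j * (∑ i', K i' j * Real.exp (y i'))⁻¹)) := by
      funext y
      rw [hF]
      simp [div_eq_mul_inv, mul_assoc]
    rw [hfun]
    convert hfinal using 1
    ext v
    simp only [ContinuousLinearMap.coe_comp', Function.comp_apply,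
      LinearMap.coe_toContinuousLinearMap', Matrix.mulVecLin_apply,
      ContinuousLinearMap.proj_apply, ContinuousLinearMap.neg_apply,
      ContinuousLinearMap.smul_apply, ContinuousLinearMap.sum_apply, smul_eq_mul,
      Matrix.mulVec, dotProduct, Matrix.mul_apply,
      Matrix.diagonal_apply, Matrix.transpose_apply, ite_mul, mul_ite,
      mul_zero, zero_mul, Finset.sum_ite_eq, Finset.sum_ite_eq',
      Finset.mem_univ, if_true]
    have hGeq : (∑ j, K i j * b j * (∑ i', K i' j * Real.exp (x i'))⁻¹)
        = ∑ j, K i j * (b j / ∑ i', K i' j * Real.exp (x i')) :=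
      Finset.sum_congr rfl fun j _ => by rw [div_eq_mul_inv, mul_assoc]
    rw [hGeq]
    simp only [neg_mul, mul_neg, Finset.sum_neg_distrib, neg_neg]
    simp only [Finset.sum_mul, Finset.mul_sum]
    rw [Finset.sum_comm]
    refine Finset.sum_congr rfl fun j _ => Finset.sum_congr rfl fun i' _ => by
      rw [one_div]; ring
  · have hexpF : ∀ i, Real.exp (F x i)
        = a i / (∑ j, K i j * (b j / ∑ i', K i' j * Real.exp (x i'))) := fun i => by
      rw [hF, Real.exp_sub, Real.exp_log (ha_pos i), Real.exp_log (hg i)]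
    ext i i'
    simp only [Matrix.mul_apply, Matrix.diagonal_apply, Matrix.transpose_apply, hP, hexpF,
      ite_mul, mul_ite, mul_zero, zero_mul, Finset.sum_ite_eq, Finset.sum_ite_eq',
      Finset.mem_univ, if_true]
    rw [Finset.sum_mul]
    refine Finset.sum_congr rfl fun j _ => ?_
    have h1 := (hs j).ne'
    have h2 := (hb_pos j).ne'
    have h3 := (ha_pos i).ne'
    have h4 := (hg i).ne'
    field_simp
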